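/- Fix a depth-d ReLU network's parameters (W, B) and an input x ∈ ℝ^n, fix a layer index 1 ≤ k ≤ d − 1, and suppose that every coordinate of f^{(j)}_{(W,B)}(x) is nonzero for each j with k ≤ j ≤ d − 1 (so the activation pattern is locally constant). Then the map W_k ↦ f_{(W,B)}(x) (all other parameters held fixed) is Fréchet differentiable at W_k, and the operator norm of its derivative (with the Frobenius norm on the domain of matrices) is at most ( ∏_{j=k+1}^d ‖W_j‖_2 ) · ‖ f^{(k−1)}_{(W,B)}(x) ‖. In particular, if ‖Z_j‖_2 ≤ s for all j and ‖(W,B) − (Z,C)‖_F ≤ r with C = 0, this gradient norm is at most (s + r)^{d−k} ‖ f^{(k−1)}_{(W,B)}(x) ‖, a bound independent of the width H. -/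

import Mathlib

open scoped BigOperators

noncomputable section

/-- Dimension of the `k`-th layer of a depth-`d` network with input dimension `n`
and `H` hidden units per layer: `dim 0 = n`, `dim d = 1`, and `H` in between. -/
def dim (n H d : ℕ) : ℕ → ℕ
  | 0 => n
  | (k + 1) => if k + 1 = d then 1 else H

/-- A parameter configuration of a depth-`d` feed-forward network. -/
structure Params (n H d : ℕ) where
  W : ∀ k : Fin d, Matrix (Fin (dim n H d (k + 1))) (Fin (dim n H d k)) ℝ
  b : ∀ k : Fin d, EuclideanSpace ℝ (Fin (dim n H d (k + 1)))

/-- Squared Frobenius norm of a matrix. -/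
def frobSq {p q : ℕ} (A : Matrix (Fin p) (Fin q) ℝ) : ℝ :=
  ∑ i, ∑ j, (A i j) ^ 2

/-- Frobenius norm of a matrix. -/
def frob {p q : ℕ} (A : Matrix (Fin p) (Fin q) ℝ) : ℝ := Real.sqrt (frobSq A)

/-- Spectral norm: operator norm of the associated map between Euclidean spaces. -/
def spec {p q : ℕ} (A : Matrix (Fin p) (Fin q) ℝ) : ℝ :=
  ‖LinearMap.toContinuousLinearMap (Matrix.toEuclideanLin A)‖

/-- `ℓ2` distance between two parameter configurations. -/
def paramDist {n H d : ℕ} (P Q : Params n H d) : ℝ :=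
  Real.sqrt (∑ k : Fin d, (frobSq (P.W k - Q.W k) + ‖P.b k - Q.b k‖ ^ 2))

/-- Coordinatewise ReLU. -/
def relu {p : ℕ} (v : EuclideanSpace ℝ (Fin p)) : EuclideanSpace ℝ (Fin p) :=
  WithLp.toLp 2 (fun i => max (v i) 0)

/-- Layer outputs of the ReLU network. -/
def layer {n H d : ℕ} (P : Params n H d) (x : EuclideanSpace ℝ (Fin n)) :
    (k : ℕ) → k ≤ d → EuclideanSpace ℝ (Fin (dim n H d k))
  | 0, _ => x
  | (k + 1), hk =>
      Matrix.toEuclideanLin (P.W ⟨k, hk⟩) (relu (layer P x k (Nat.le_of_succ_le hk)))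
        + P.b ⟨k, hk⟩

/-- Layer outputs of the linear network (no activation). -/
def linLayer {n H d : ℕ} (P : Params n H d) (x : EuclideanSpace ℝ (Fin n)) :
    (k : ℕ) → k ≤ d → EuclideanSpace ℝ (Fin (dim n H d k))
  | 0, _ => x
  | (k + 1), hk =>
      Matrix.toEuclideanLin (P.W ⟨k, hk⟩) (linLayer P x k (Nat.le_of_succ_le hk))
        + P.b ⟨k, hk⟩

lemma dim_last {n H d : ℕ} (hd : 0 < d) : dim n H d d = 1 := by
  cases d with
  | zero => omega
  | succ k => simp [dim]

/-- Real-valued output of the ReLU network. -/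
def netOut {n H d : ℕ} (hd : 0 < d) (P : Params n H d) (x : EuclideanSpace ℝ (Fin n)) : ℝ :=
  layer P x d le_rfl ⟨0, by rw [dim_last hd]; omega⟩

/-- Real-valued output of the linear network. -/
def linNetOut {n H d : ℕ} (hd : 0 < d) (P : Params n H d) (x : EuclideanSpace ℝ (Fin n)) : ℝ :=
  linLayer P x d le_rfl ⟨0, by rw [dim_last hd]; omega⟩

/-- Expectation over a Rademacher vector `ξ` drawn uniformly from `{-1,1}^m`. -/
def radExp (m : ℕ) (g : (Fin m → ℝ) → ℝ) : ℝ :=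
  (∑ ε : Fin m → Bool, g (fun i => if ε i then 1 else -1)) / 2 ^ m

attribute [local instance] Matrix.frobeniusSeminormedAddCommGroup
  Matrix.frobeniusNormedAddCommGroup Matrix.frobeniusNormedSpace

-- auxiliary lemmas scratch
section Aux
variable {n H d : ℕ}

lemma spec_nonneg {p q : ℕ} (A : Matrix (Fin p) (Fin q) ℝ) : 0 ≤ spec A :=
  norm_nonneg _

lemma frobSq_nonneg {p q : ℕ} (A : Matrix (Fin p) (Fin q) ℝ) : 0 ≤ frobSq A := by
  apply Finset.sum_nonneg; intro i _; apply Finset.sum_nonneg; intro j _; positivity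

/-- Frobenius norm of the local instance equals `frob`. -/
lemma norm_eq_frob {p q : ℕ} (A : Matrix (Fin p) (Fin q) ℝ) : ‖A‖ = frob A := by
  rw [Matrix.frobenius_norm_def, frob, frobSq, ← Real.sqrt_eq_rpow]
  simp [Real.norm_eq_abs, sq_abs]

lemma euclid_norm_sq {p : ℕ} (v : EuclideanSpace ℝ (Fin p)) :
    ‖v‖ ^ 2 = ∑ i, (v i) ^ 2 := by
  rw [EuclideanSpace.norm_eq, Real.sq_sqrt]
  · apply Finset.sum_congr rfl; intro i _; rw [Real.norm_eq_abs, sq_abs]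
  · positivity

lemma apply_coord {p q : ℕ} (A : Matrix (Fin p) (Fin q) ℝ)
    (v : EuclideanSpace ℝ (Fin q)) (i : Fin p) :
    (Matrix.toEuclideanLin A v) i = ∑ j, A i j * v j := rfl

lemma toEuclideanLin_norm_le {p q : ℕ} (A : Matrix (Fin p) (Fin q) ℝ)
    (v : EuclideanSpace ℝ (Fin q)) :
    ‖Matrix.toEuclideanLin A v‖ ≤ frob A * ‖v‖ := by
  have h1 : ‖Matrix.toEuclideanLin A v‖ ^ 2 ≤ (frob A * ‖v‖) ^ 2 := by
    rw [euclid_norm_sq, mul_pow, frob, Real.sq_sqrt (frobSq_nonneg A), euclid_norm_sq, frobSq]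
    rw [Finset.sum_mul]
    apply Finset.sum_le_sum
    intro i _
    calc (Matrix.toEuclideanLin A v i) ^ 2 = (∑ j, A i j * v j) ^ 2 := by rw [apply_coord]
      _ ≤ (∑ j, (A i j) ^ 2) * ∑ j, (v j) ^ 2 := Finset.sum_mul_sq_le_sq_mul_sq _ _ _
  have h2 : 0 ≤ frob A * ‖v‖ := by
    have : 0 ≤ frob A := Real.sqrt_nonneg _
    positivity
  nlinarith [norm_nonneg ((Matrix.toEuclideanLin A) v)]

lemma spec_le_spec_add_frob {p q : ℕ} (A B : Matrix (Fin p) (Fin q) ℝ) :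
    spec A ≤ spec B + frob (A - B) := by
  have h : (LinearMap.toContinuousLinearMap (Matrix.toEuclideanLin A)) =
      (LinearMap.toContinuousLinearMap (Matrix.toEuclideanLin B)) +
      (LinearMap.toContinuousLinearMap (Matrix.toEuclideanLin (A - B))) := by
    ext v
    simp [map_sub]
  calc spec A = ‖(LinearMap.toContinuousLinearMap (Matrix.toEuclideanLin B)) +
      (LinearMap.toContinuousLinearMap (Matrix.toEuclideanLin (A - B)))‖ := by
        rw [spec, h]
    _ ≤ spec B + spec (A - B) := norm_add_le _ _
    _ ≤ spec B + frob (A - B) := by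
        gcongr
        rw [spec]
        apply ContinuousLinearMap.opNorm_le_bound
        · rw [frob]; positivity
        · intro v
          exact toEuclideanLin_norm_le _ _

end Aux
section Aux2

/-- Diagonal continuous linear map on Euclidean space. -/
def diagCLM {p : ℕ} (c : Fin p → ℝ) :
    EuclideanSpace ℝ (Fin p) →L[ℝ] EuclideanSpace ℝ (Fin p) :=
  LinearMap.toContinuousLinearMap
    { toFun := fun w => WithLp.toLp 2 (fun i => c i * w i)
      map_add' := by intro u v; ext i; simp [mul_add]
      map_smul' := by intro a v; ext i; simp [smul_eq_mul, mul_left_comm] }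

@[simp] lemma diagCLM_apply {p : ℕ} (c : Fin p → ℝ) (w : EuclideanSpace ℝ (Fin p)) (i : Fin p) :
    diagCLM c w i = c i * w i := rfl

lemma diagCLM_norm_le {p : ℕ} (c : Fin p → ℝ) (hc : ∀ i, |c i| ≤ 1) :
    ‖diagCLM c‖ ≤ 1 := by
  apply ContinuousLinearMap.opNorm_le_bound _ zero_le_one
  intro v
  rw [one_mul]
  have h1 : ‖diagCLM c v‖ ^ 2 ≤ ‖v‖ ^ 2 := by
    rw [euclid_norm_sq, euclid_norm_sq]
    apply Finset.sum_le_sum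
    intro i _
    have : (diagCLM c v i) ^ 2 = (c i) ^ 2 * (v i) ^ 2 := by
      rw [diagCLM_apply]; ring
    rw [this]
    have hci : (c i) ^ 2 ≤ 1 := by
      have := hc i
      nlinarith [abs_nonneg (c i), sq_abs (c i)]
    nlinarith [sq_nonneg (v i)]
  nlinarith [norm_nonneg (diagCLM c v), norm_nonneg v]

/-- relu is differentiable at points with all coordinates nonzero. -/
lemma hasFDerivAt_relu {p : ℕ} (v : EuclideanSpace ℝ (Fin p)) (hv : ∀ i, v i ≠ 0) :
    HasFDerivAt relu (diagCLM (fun i => if 0 < v i then (1:ℝ) else 0)) v := by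
  set c : Fin p → ℝ := fun i => if 0 < v i then (1:ℝ) else 0 with hc
  have hlin : HasFDerivAt (fun w => diagCLM c w) (diagCLM c) v :=
    (diagCLM c).hasFDerivAt
  apply hlin.congr_of_eventuallyEq
  have hopen : ∀ i : Fin p, ∀ᶠ w : EuclideanSpace ℝ (Fin p) in nhds v,
      relu w i = diagCLM c w i := by
    intro i
    have hcont : Continuous (fun w : EuclideanSpace ℝ (Fin p) => w i) :=
      (EuclideanSpace.proj i).continuous
    rcases lt_or_gt_of_ne (hv i) with h | h
    · -- v i < 0
      have : ∀ᶠ w : EuclideanSpace ℝ (Fin p) in nhds v, w i < 0 :=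
        (hcont.tendsto v).eventually (eventually_lt_nhds h)
      filter_upwards [this] with w hw
      simp [relu, diagCLM_apply, hc, not_lt.mpr (le_of_lt h), max_eq_right (le_of_lt hw)]
    · -- 0 < v i
      have : ∀ᶠ w : EuclideanSpace ℝ (Fin p) in nhds v, 0 < w i :=
        (hcont.tendsto v).eventually (eventually_gt_nhds h)
      filter_upwards [this] with w hw
      simp [relu, diagCLM_apply, hc, h, max_eq_left (le_of_lt hw)]
  have : ∀ᶠ w : EuclideanSpace ℝ (Fin p) in nhds v, relu w = diagCLM c w := by
    have := Filter.eventually_all.2 hopen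
    filter_upwards [this] with w hw
    ext i; exact hw i
  exact this

lemma norm_relu_le {p : ℕ} (v : EuclideanSpace ℝ (Fin p)) : ‖relu v‖ ≤ ‖v‖ := by
  have h1 : ‖relu v‖ ^ 2 ≤ ‖v‖ ^ 2 := by
    rw [euclid_norm_sq, euclid_norm_sq]
    apply Finset.sum_le_sum
    intro i _
    have : relu v i = max (v i) 0 := rfl
    rw [this]
    rcases le_or_gt (v i) 0 with h | h
    · rw [max_eq_right h]; simpa using sq_nonneg (v i)
    · rw [max_eq_left (le_of_lt h)]
  nlinarith [norm_nonneg (relu v), norm_nonneg v]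

end Aux2
section Aux3

/-- The CLM `M ↦ M ⬝ u` from matrices (Frobenius norm) to Euclidean space. -/
def matApplyCLM {p q : ℕ} (u : EuclideanSpace ℝ (Fin q)) :
    Matrix (Fin p) (Fin q) ℝ →L[ℝ] EuclideanSpace ℝ (Fin p) :=
  LinearMap.toContinuousLinearMap
    { toFun := fun M => Matrix.toEuclideanLin M u
      map_add' := by intro A B; rw [map_add]; rfl
      map_smul' := by intro a A; rw [map_smul]; rfl }

@[simp] lemma matApplyCLM_apply {p q : ℕ} (u : EuclideanSpace ℝ (Fin q))
    (M : Matrix (Fin p) (Fin q) ℝ) : matApplyCLM u M = Matrix.toEuclideanLin M u := rfl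

lemma matApplyCLM_norm_le {p q : ℕ} (u : EuclideanSpace ℝ (Fin q)) :
    @Norm.norm _ ContinuousLinearMap.hasOpNorm (matApplyCLM u : Matrix (Fin p) (Fin q) ℝ →L[ℝ] EuclideanSpace ℝ (Fin p)) ≤ ‖u‖ := by
  apply ContinuousLinearMap.opNorm_le_bound _ (norm_nonneg u)
  intro M
  change ‖Matrix.toEuclideanLin M u‖ ≤ ‖u‖ * ‖M‖; rw [mul_comm]
  calc ‖Matrix.toEuclideanLin M u‖ ≤ frob M * ‖u‖ := toEuclideanLin_norm_le M u
    _ = ‖M‖ * ‖u‖ := by rw [norm_eq_frob]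

lemma layer_update_eq {n H d : ℕ} (P : Params n H d) (x : EuclideanSpace ℝ (Fin n))
    (κ : Fin d) (M : Matrix (Fin (dim n H d ((κ : ℕ) + 1))) (Fin (dim n H d κ)) ℝ) :
    ∀ (j : ℕ) (hj : j ≤ d), j ≤ (κ : ℕ) →
      layer ⟨Function.update P.W κ M, P.b⟩ x j hj = layer P x j hj := by
  intro j
  induction j with
  | zero => intro hj _; rfl
  | succ k ih =>
      intro hj hk
      simp only [layer]
      rw [ih (Nat.le_of_succ_le hj) (by omega)]
      have hne : (⟨k, hj⟩ : Fin d) ≠ κ := by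
        intro h
        have : k = (κ : ℕ) := by rw [← h]
        omega
      rw [Function.update_of_ne hne]

lemma card_filter_gt {d : ℕ} (κ : Fin d) :
    (Finset.univ.filter (fun j : Fin d => κ < j)).card = d - 1 - (κ : ℕ) := by
  have h : Finset.univ.filter (fun j : Fin d => κ < j) = Finset.Ioi κ := by
    ext j; simp
  rw [h, Fin.card_Ioi]

lemma main_ind {n H d : ℕ} (P : Params n H d) (x : EuclideanSpace ℝ (Fin n)) (κ : Fin d)
    (hpattern : ∀ (j : ℕ), (κ : ℕ) + 1 ≤ j → j ≤ d - 1 → ∀ (hj : j ≤ d)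
      (i : Fin (dim n H d j)), layer P x j hj i ≠ 0) :
    ∀ (j : ℕ), (κ : ℕ) + 1 ≤ j → ∀ (hj : j ≤ d),
    ∃ f' : Matrix (Fin (dim n H d ((κ : ℕ) + 1))) (Fin (dim n H d κ)) ℝ →L[ℝ]
        EuclideanSpace ℝ (Fin (dim n H d j)),
      HasFDerivAt (fun M => layer ⟨Function.update P.W κ M, P.b⟩ x j hj) f' (P.W κ) ∧
      (@Norm.norm _ ContinuousLinearMap.hasOpNorm f') ≤ (∏ i ∈ Finset.univ.filter (fun i : Fin d => κ < i ∧ (i : ℕ) < j), spec (P.W i))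
          * ‖relu (layer P x κ (le_of_lt κ.2))‖ := by
  intro j hj1
  induction j, hj1 using Nat.le_induction with
  | base =>
      intro hj
      set u := relu (layer P x κ (le_of_lt κ.2)) with hu
      have hfun : (fun M => layer
            (⟨Function.update P.W κ M, P.b⟩ : Params n H d) x ((κ : ℕ) + 1) hj)
          = fun M => matApplyCLM u M + P.b κ := by
        funext M
        simp only [layer]
        rw [layer_update_eq P x κ M (κ : ℕ) (Nat.le_of_succ_le hj) le_rfl]
        have hup : Function.update P.W κ M ⟨(κ : ℕ), hj⟩ = M :=
          Function.update_self κ M P.W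
        rw [hup]
        rfl
      refine ⟨matApplyCLM u, ?_, ?_⟩
      · rw [hfun]
        exact (matApplyCLM u).hasFDerivAt.add_const (P.b κ)
      · have hempty : Finset.univ.filter (fun i : Fin d => κ < i ∧ (i : ℕ) < (κ : ℕ) + 1)
            = ∅ := by
          ext i
          simp only [Finset.mem_filter, Finset.mem_univ, true_and, Finset.notMem_empty,
            iff_false, Fin.lt_def, not_and]
          omega
        rw [hempty, Finset.prod_empty, one_mul]
        exact matApplyCLM_norm_le u
  | succ j hj1 ih =>
      intro hj
      obtain ⟨f', hF, hnorm⟩ := ih (Nat.le_of_succ_le hj)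
      set jf : Fin d := ⟨j, hj⟩ with hjf
      have hne : jf ≠ κ := by
        intro h
        have : j = (κ : ℕ) := by rw [← h]
        omega
      set A := P.W jf with hA
      set Acl := LinearMap.toContinuousLinearMap (Matrix.toEuclideanLin A) with hAcl
      set v := layer P x j (Nat.le_of_succ_le hj) with hv
      have hvz : ∀ i, v i ≠ 0 := hpattern j hj1 (by omega) (Nat.le_of_succ_le hj)
      set c : Fin (dim n H d j) → ℝ := fun i => if 0 < v i then (1:ℝ) else 0 with hc
      have hrelu : HasFDerivAt relu (diagCLM c) v := hasFDerivAt_relu v hvz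
      have heq : (fun M => layer
            (⟨Function.update P.W κ M, P.b⟩ : Params n H d) x j (Nat.le_of_succ_le hj))
            (P.W κ) = v := by
        have hupd : Function.update P.W κ (P.W κ) = P.W := Function.update_eq_self κ P.W
        simp only [hupd]; rfl
      rw [← heq] at hrelu
      have hcomp := hrelu.comp (P.W κ) hF
      have hfull := (Acl.hasFDerivAt.comp (P.W κ) hcomp).add_const (P.b jf)
      have hfun : (fun M => layer
            (⟨Function.update P.W κ M, P.b⟩ : Params n H d) x (j + 1) hj)
          = fun M => Acl (relu ((fun M => layer
            (⟨Function.update P.W κ M, P.b⟩ : Params n H d) x j (Nat.le_of_succ_le hj)) M))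
            + P.b jf := by
        funext M
        simp only [layer]
        rw [Function.update_of_ne hne]
        rfl
      refine ⟨Acl.comp ((diagCLM c).comp f'), ?_, ?_⟩
      · rw [hfun]; exact hfull
      · have hins : Finset.univ.filter (fun i : Fin d => κ < i ∧ (i : ℕ) < j + 1)
            = insert jf (Finset.univ.filter (fun i : Fin d => κ < i ∧ (i : ℕ) < j)) := by
          ext i
          simp only [Finset.mem_filter, Finset.mem_univ, true_and, Finset.mem_insert,
            Fin.lt_def, Fin.ext_iff]
          have : (jf : ℕ) = j := rfl
          omega
        have hnotmem : jf ∉ Finset.univ.filter (fun i : Fin d => κ < i ∧ (i : ℕ) < j) := by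
          simp only [Finset.mem_filter, Finset.mem_univ, true_and, not_and]
          intro _
          exact lt_irrefl j
        rw [hins, Finset.prod_insert hnotmem]
        have h1 : (@Norm.norm _ ContinuousLinearMap.hasOpNorm (Acl.comp ((diagCLM c).comp f'))) ≤ ‖Acl‖ * (‖diagCLM c‖ * (@Norm.norm _ ContinuousLinearMap.hasOpNorm f')) :=
          le_trans (ContinuousLinearMap.opNorm_comp_le _ _)
            (by gcongr; exact ContinuousLinearMap.opNorm_comp_le _ _)
        have hD : ‖diagCLM c‖ ≤ 1 := by
          apply diagCLM_norm_le
          intro i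
          rw [hc]
          dsimp only
          split <;> simp
        have hAspec : ‖Acl‖ = spec A := rfl
        have hprodnn : 0 ≤ ∏ i ∈ Finset.univ.filter (fun i : Fin d => κ < i ∧ (i : ℕ) < j),
            spec (P.W i) := Finset.prod_nonneg (fun i _ => spec_nonneg _)
        have hunn : 0 ≤ ‖relu (layer P x κ (le_of_lt κ.2))‖ := norm_nonneg _
        calc (@Norm.norm _ ContinuousLinearMap.hasOpNorm (Acl.comp ((diagCLM c).comp f'))) ≤ ‖Acl‖ * (‖diagCLM c‖ * (@Norm.norm _ ContinuousLinearMap.hasOpNorm f')) := h1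
          _ ≤ spec A * (1 * ((∏ i ∈ Finset.univ.filter
                (fun i : Fin d => κ < i ∧ (i : ℕ) < j), spec (P.W i))
                * ‖relu (layer P x κ (le_of_lt κ.2))‖)) := by
              rw [hAspec]
              apply mul_le_mul_of_nonneg_left _ (spec_nonneg A)
              exact mul_le_mul hD hnorm (ContinuousLinearMap.opNorm_nonneg f') zero_le_one
          _ = spec (P.W jf) * (∏ i ∈ Finset.univ.filter
                (fun i : Fin d => κ < i ∧ (i : ℕ) < j), spec (P.W i))
                * ‖relu (layer P x κ (le_of_lt κ.2))‖ := by rw [hA]; ring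

end Aux3
lemma coord_norm_le {p : ℕ} (v : EuclideanSpace ℝ (Fin p)) (i : Fin p) : |v i| ≤ ‖v‖ := by
  have h1 : (v i) ^ 2 ≤ ‖v‖ ^ 2 := by
    rw [euclid_norm_sq]
    exact Finset.single_le_sum (f := fun j => (v j) ^ 2)
      (fun j _ => sq_nonneg _) (Finset.mem_univ i)
  nlinarith [norm_nonneg v, abs_nonneg (v i), sq_abs (v i)]

lemma proj_norm_le {p : ℕ} (i : Fin p) :
    ‖(EuclideanSpace.proj i : EuclideanSpace ℝ (Fin p) →L[ℝ] ℝ)‖ ≤ 1 := by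
  apply ContinuousLinearMap.opNorm_le_bound _ zero_le_one
  intro v
  rw [one_mul]
  exact coord_norm_le v i

/-- if the activation pattern is locally constant (all coordinates of
the layer outputs from layer `κ+1` up to `d-1` are nonzero), then the network output
is Fréchet differentiable in the `κ`-th weight matrix (domain equipped with the
Frobenius norm), and the operator norm of the derivative is bounded by the product
of the downstream spectral norms times `‖f^{(κ)}(x)‖`; in particular, within
distance `r` of a spectrally `s`-bounded zero-bias initialization, by
`(s+r)^(d-1-κ) ‖f^{(κ)}(x)‖`, independently of the width `H`. -/
theorem stmt11 {n H d : ℕ} (hd : 0 < d) (P : Params n H d)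
    (x : EuclideanSpace ℝ (Fin n))
    (κ : Fin d) (hκ : (κ : ℕ) + 1 ≤ d - 1)
    (hpattern : ∀ (j : ℕ), (κ : ℕ) + 1 ≤ j → j ≤ d - 1 → ∀ (hj : j ≤ d)
      (i : Fin (dim n H d j)), layer P x j hj i ≠ 0)
    (G : Matrix (Fin (dim n H d ((κ : ℕ) + 1))) (Fin (dim n H d κ)) ℝ → ℝ)
    (hG : ∀ M, G M = netOut hd ⟨Function.update P.W κ M, P.b⟩ x) :
    DifferentiableAt ℝ G (P.W κ) ∧
      @Norm.norm _ ContinuousLinearMap.hasOpNorm (fderiv ℝ G (P.W κ))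
        ≤ (∏ j ∈ Finset.univ.filter (fun j : Fin d => κ < j), spec (P.W j))
            * ‖layer P x κ (le_of_lt κ.2)‖ ∧
      ∀ (Z : Params n H d) (s r : ℝ), (∀ k, spec (Z.W k) ≤ s) → (∀ k, Z.b k = 0) →
        paramDist P Z ≤ r →
        @Norm.norm _ ContinuousLinearMap.hasOpNorm (fderiv ℝ G (P.W κ))
          ≤ (s + r) ^ (d - 1 - (κ : ℕ)) * ‖layer P x κ (le_of_lt κ.2)‖ := by
  obtain ⟨f', hF, hnorm⟩ := main_ind P x κ hpattern d (by omega) le_rfl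
  set i0 : Fin (dim n H d d) := ⟨0, by rw [dim_last hd]; omega⟩ with hi0
  have hGfun : G = fun M =>
      (EuclideanSpace.proj i0 : EuclideanSpace ℝ (Fin (dim n H d d)) →L[ℝ] ℝ)
        (layer (⟨Function.update P.W κ M, P.b⟩ : Params n H d) x d le_rfl) := by
    funext M
    rw [hG M]
    rfl
  have hGder : HasFDerivAt G
      ((EuclideanSpace.proj i0 : EuclideanSpace ℝ (Fin (dim n H d d)) →L[ℝ] ℝ).comp f')
      (P.W κ) := by
    rw [hGfun]
    exact (EuclideanSpace.proj i0).hasFDerivAt.comp (P.W κ) hF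
  have hdiff : DifferentiableAt ℝ G (P.W κ) := hGder.differentiableAt
  have hfd : fderiv ℝ G (P.W κ)
      = (EuclideanSpace.proj i0 : EuclideanSpace ℝ (Fin (dim n H d d)) →L[ℝ] ℝ).comp f' :=
    hGder.fderiv
  have hfilter : Finset.univ.filter (fun i : Fin d => κ < i ∧ (i : ℕ) < d)
      = Finset.univ.filter (fun i : Fin d => κ < i) := by
    ext i
    simp [i.isLt]
  have hprodnn : 0 ≤ ∏ j ∈ Finset.univ.filter (fun j : Fin d => κ < j), spec (P.W j) :=
    Finset.prod_nonneg (fun i _ => spec_nonneg _)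
  have hbound : (@Norm.norm _ ContinuousLinearMap.hasOpNorm (fderiv ℝ G (P.W κ)))
      ≤ (∏ j ∈ Finset.univ.filter (fun j : Fin d => κ < j), spec (P.W j))
          * ‖layer P x κ (le_of_lt κ.2)‖ := by
    have hfd' := congrArg (fun T => @Norm.norm _ ContinuousLinearMap.hasOpNorm T) hfd
    refine le_trans (le_of_eq hfd') ?_
    calc (@Norm.norm _ ContinuousLinearMap.hasOpNorm ((EuclideanSpace.proj i0 :
            EuclideanSpace ℝ (Fin (dim n H d d)) →L[ℝ] ℝ).comp f'))
        ≤ ‖(EuclideanSpace.proj i0 :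
            EuclideanSpace ℝ (Fin (dim n H d d)) →L[ℝ] ℝ)‖ * (@Norm.norm _ ContinuousLinearMap.hasOpNorm f') :=
          ContinuousLinearMap.opNorm_comp_le _ _
      _ ≤ 1 * (@Norm.norm _ ContinuousLinearMap.hasOpNorm f') := by
          apply mul_le_mul_of_nonneg_right (proj_norm_le i0) (ContinuousLinearMap.opNorm_nonneg f')
      _ = (@Norm.norm _ ContinuousLinearMap.hasOpNorm f') := one_mul _
      _ ≤ (∏ j ∈ Finset.univ.filter (fun j : Fin d => κ < j), spec (P.W j))
            * ‖relu (layer P x κ (le_of_lt κ.2))‖ := by rw [← hfilter]; exact hnorm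
      _ ≤ (∏ j ∈ Finset.univ.filter (fun j : Fin d => κ < j), spec (P.W j))
            * ‖layer P x κ (le_of_lt κ.2)‖ :=
          mul_le_mul_of_nonneg_left (norm_relu_le _) hprodnn
  refine ⟨hdiff, hbound, ?_⟩
  intro Z s r hs hb hdist
  have hfrob : ∀ k : Fin d, frob (P.W k - Z.W k) ≤ r := by
    intro k
    have h1 : frobSq (P.W k - Z.W k)
        ≤ ∑ k : Fin d, (frobSq (P.W k - Z.W k) + ‖P.b k - Z.b k‖ ^ 2) := by
      calc frobSq (P.W k - Z.W k)
          ≤ frobSq (P.W k - Z.W k) + ‖P.b k - Z.b k‖ ^ 2 :=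
            le_add_of_nonneg_right (sq_nonneg _)
        _ ≤ _ := Finset.single_le_sum
            (f := fun k : Fin d => frobSq (P.W k - Z.W k) + ‖P.b k - Z.b k‖ ^ 2)
            (fun i _ => add_nonneg (frobSq_nonneg _) (sq_nonneg _)) (Finset.mem_univ k)
    calc frob (P.W k - Z.W k) ≤ paramDist P Z := by
          rw [frob, paramDist]
          exact Real.sqrt_le_sqrt h1
      _ ≤ r := hdist
  have hspec : ∀ k : Fin d, spec (P.W k) ≤ s + r := by
    intro k
    calc spec (P.W k) ≤ spec (Z.W k) + frob (P.W k - Z.W k) := spec_le_spec_add_frob _ _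
      _ ≤ s + r := add_le_add (hs k) (hfrob k)
  have hprod : (∏ j ∈ Finset.univ.filter (fun j : Fin d => κ < j), spec (P.W j))
      ≤ (s + r) ^ (d - 1 - (κ : ℕ)) := by
    calc (∏ j ∈ Finset.univ.filter (fun j : Fin d => κ < j), spec (P.W j))
        ≤ ∏ _j ∈ Finset.univ.filter (fun j : Fin d => κ < j), (s + r) :=
          Finset.prod_le_prod (fun i _ => spec_nonneg _) (fun i _ => hspec i)
      _ = (s + r) ^ (d - 1 - (κ : ℕ)) := by
          rw [Finset.prod_const, card_filter_gt]
  calc (@Norm.norm _ ContinuousLinearMap.hasOpNorm (fderiv ℝ G (P.W κ)))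
      ≤ (∏ j ∈ Finset.univ.filter (fun j : Fin d => κ < j), spec (P.W j))
          * ‖layer P x κ (le_of_lt κ.2)‖ := hbound
    _ ≤ (s + r) ^ (d - 1 - (κ : ℕ)) * ‖layer P x κ (le_of_lt κ.2)‖ :=
        mul_le_mul_of_nonneg_right hprod (norm_nonneg _)
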